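/- Let G be a finite simple graph containing a vertex v of degree k ≥ 2 whose neighbors are v_1,…,v_k, where v_1,…,v_{k−1} each have degree 1 (i.e., v is their only neighbor). Let G' be the induced subgraph of G on V(G) ∖ {v, v_1,…,v_{k−1}} and let G'' be the induced subgraph of G on V(G) ∖ {v, v_1,…,v_k}. Then P_G(x) = (1+x)^{k−1} · P_{G'}(x) + x · P_{G''}(x). -/
import Mathlib


attribute [local instance] Classical.propDecidable

/-- `s` is an independent set of vertices of `G`. -/
def IsIndep {V : Type*} (G : SimpleGraph V) (s : Finset V) : Prop :=
  ∀ v ∈ s, ∀ w ∈ s, ¬ G.Adj v w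

/-- The independence polynomial `P_G(x) = ∑ g_i x^i`. -/
noncomputable def indepPoly {V : Type*} [Fintype V] (G : SimpleGraph V) : Polynomial ℤ :=
  ∑ s ∈ Finset.univ.filter (fun s : Finset V => IsIndep G s), Polynomial.X ^ s.card

open Finset Polynomial

lemma indepPoly_induce {V : Type*} [Fintype V] (G : SimpleGraph V) (S : Set V) [Fintype ↥S] :
    indepPoly (G.induce S)
      = ∑ s ∈ univ.filter (fun s : Finset V => IsIndep G s ∧ ∀ x ∈ s, x ∈ S),
          (X : Polynomial ℤ) ^ s.card := by
  unfold indepPoly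
  apply Finset.sum_nbij' (i := fun s' => s'.map (Function.Embedding.subtype _))
    (j := fun s => s.subtype (· ∈ S))
  · intro s' hs'
    simp only [mem_filter, mem_univ, true_and] at hs' ⊢
    constructor
    · intro a ha b hb hab
      simp only [Finset.mem_map, Function.Embedding.coe_subtype] at ha hb
      obtain ⟨a', ha', rfl⟩ := ha
      obtain ⟨b', hb', rfl⟩ := hb
      exact hs' a' ha' b' hb' hab
    · intro x hx
      simp only [Finset.mem_map, Function.Embedding.coe_subtype] at hx
      obtain ⟨x', _, rfl⟩ := hx
      exact x'.2
  · intro s hs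
    simp only [mem_filter, mem_univ, true_and] at hs ⊢
    intro a ha b hb hab
    rw [Finset.mem_subtype] at ha hb
    exact hs.1 a ha b hb hab
  · intro s' hs'
    ext a
    simp [Finset.mem_subtype, Finset.mem_map]
  · intro s hs
    simp only [mem_filter, mem_univ, true_and] at hs
    ext a
    simp only [Finset.mem_map, Finset.mem_subtype, Function.Embedding.coe_subtype]
    constructor
    · rintro ⟨x, hx, rfl⟩; exact hx
    · intro ha; exact ⟨⟨a, hs.2 a ha⟩, ha, rfl⟩
  · intro s' hs'
    rw [Finset.card_map]


set_option maxHeartbeats 1000000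

/-- Jacques–Katzman type decomposition of the independence polynomial: if `v` has degree
`k ≥ 2` with neighbors `v_1,…,v_k` (given by the injective map `vs`) such that
`v_1,…,v_{k-1}` are leaves whose only neighbor is `v`, then
`P_G(x) = (1+x)^{k-1} P_{G'}(x) + x P_{G''}(x)`, where `G'` is induced on
`V ∖ {v, v_1,…,v_{k-1}}` and `G''` on `V ∖ {v, v_1,…,v_k}`. -/
theorem indepPoly_leaf_decomposition {V : Type*} [Fintype V] (G : SimpleGraph V)
    (k : ℕ) (hk : 2 ≤ k) (v : V) (vs : Fin k → V) (hinj : Function.Injective vs)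
    (hnbr : ∀ w, G.Adj v w ↔ ∃ i, vs i = w)
    (hleaf : ∀ i : Fin k, (i : ℕ) < k - 1 → ∀ w, G.Adj (vs i) w ↔ w = v) :
    indepPoly G
      = (1 + Polynomial.X) ^ (k - 1)
          * indepPoly (G.induce (({v} ∪ {w | ∃ i : Fin k, (i : ℕ) < k - 1 ∧ vs i = w} : Set V)ᶜ))
        + Polynomial.X
          * indepPoly (G.induce (({v} ∪ Set.range vs : Set V)ᶜ)) := by
  classical
  have hne : ∀ i, vs i ≠ v := fun i h => (G.irrefl (h ▸ (hnbr (vs i)).2 ⟨i, rfl⟩))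
  set L : Finset V := (Finset.univ.filter fun i : Fin k => (i : ℕ) < k - 1).image vs with hL
  have hmemL : ∀ x, x ∈ L ↔ ∃ i : Fin k, (i : ℕ) < k - 1 ∧ vs i = x := by
    intro x; simp [hL, Finset.mem_image, Finset.mem_filter]
  have hvL : v ∉ L := by
    rw [hmemL]; rintro ⟨i, _, h⟩; exact hne i h
  have hLcard : L.card = k - 1 := by
    rw [hL, Finset.card_image_of_injective _ hinj]
    have : (Finset.univ.filter fun i : Fin k => (i : ℕ) < k - 1)
        = (Finset.univ : Finset (Fin (k-1))).map
            ⟨Fin.castLE (by omega), Fin.castLE_injective _⟩ := by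
      ext i
      simp only [Finset.mem_filter, Finset.mem_univ, true_and, Finset.mem_map,
        Function.Embedding.coeFn_mk]
      constructor
      · intro h; exact ⟨⟨(i : ℕ), h⟩, by ext; simp⟩
      · rintro ⟨j, rfl⟩; exact j.2
    rw [this, Finset.card_map, Finset.card_univ, Fintype.card_fin]
  simp only [indepPoly_induce]
  unfold indepPoly
  rw [← Finset.sum_filter_add_sum_filter_not
      (Finset.univ.filter fun s : Finset V => IsIndep G s) (fun s => v ∈ s), add_comm]
  congr 1
  · -- v ∉ s part
    have key : ∑ s ∈ (Finset.univ.filter fun s : Finset V => IsIndep G s).filter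
          (fun s => ¬ v ∈ s), (X : Polynomial ℤ) ^ s.card
        = ∑ p ∈ L.powerset ×ˢ (Finset.univ.filter fun s : Finset V => IsIndep G s ∧
            ∀ x ∈ s, x ∈ (({v} ∪ {w | ∃ i : Fin k, (i : ℕ) < k - 1 ∧ vs i = w} : Set V)ᶜ)),
            (X : Polynomial ℤ) ^ (p.1.card + p.2.card) := by
      apply Finset.sum_nbij' (i := fun s => (s ∩ L, s \ L)) (j := fun p => p.1 ∪ p.2)
      · intro s hs
        simp only [Finset.mem_filter, Finset.mem_univ, true_and] at hs
        obtain ⟨hind, hvs⟩ := hs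
        simp only [Finset.mem_product, Finset.mem_powerset, Finset.mem_filter,
          Finset.mem_univ, true_and]
        refine ⟨Finset.inter_subset_right, ?_, ?_⟩
        · intro a ha b hb; exact hind a (Finset.mem_sdiff.1 ha).1 b (Finset.mem_sdiff.1 hb).1
        · intro x hx
          rw [Finset.mem_sdiff] at hx
          simp only [Set.mem_compl_iff, Set.mem_union, Set.mem_singleton_iff,
            Set.mem_setOf_eq, not_or]
          refine ⟨fun h => hvs (h ▸ hx.1), fun h => hx.2 ((hmemL x).2 h)⟩
      · intro p hp
        simp only [Finset.mem_product, Finset.mem_powerset, Finset.mem_filter,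
          Finset.mem_univ, true_and] at hp
        obtain ⟨hA, hind, hsub⟩ := hp
        have htne : ∀ x ∈ p.2, x ≠ v ∧ x ∉ L := by
          intro x hx
          have := hsub x hx
          simp only [Set.mem_compl_iff, Set.mem_union, Set.mem_singleton_iff,
            Set.mem_setOf_eq, not_or] at this
          exact ⟨this.1, fun h => this.2 ((hmemL x).1 h)⟩
        simp only [Finset.mem_filter, Finset.mem_univ, true_and]
        refine ⟨?_, fun hv => ?_⟩
        · intro a ha b hb hab
          rw [Finset.mem_union] at ha hb
          rcases ha with ha | ha <;> rcases hb with hb | hb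
          · obtain ⟨i, hi, rfl⟩ := (hmemL a).1 (hA ha)
            obtain ⟨j, hj, rfl⟩ := (hmemL b).1 (hA hb)
            exact hne j ((hleaf i hi _).1 hab)
          · obtain ⟨i, hi, rfl⟩ := (hmemL a).1 (hA ha)
            exact (htne b hb).1 ((hleaf i hi _).1 hab)
          · obtain ⟨j, hj, rfl⟩ := (hmemL b).1 (hA hb)
            exact (htne a ha).1 ((hleaf j hj _).1 hab.symm)
          · exact hind a ha b hb hab
        · rcases Finset.mem_union.1 hv with h | h
          · exact hvL (hA h)
          · exact (htne v h).1 rfl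
      · intro s hs
        simp only [Finset.mem_filter, Finset.mem_univ, true_and] at hs
        ext a
        simp only [Finset.mem_union, Finset.mem_inter, Finset.mem_sdiff]
        tauto
      · intro p hp
        simp only [Finset.mem_product, Finset.mem_powerset, Finset.mem_filter,
          Finset.mem_univ, true_and] at hp
        obtain ⟨hA, hind, hsub⟩ := hp
        have htL : ∀ x ∈ p.2, x ∉ L := by
          intro x hx h
          have := hsub x hx
          simp only [Set.mem_compl_iff, Set.mem_union, Set.mem_singleton_iff,
            Set.mem_setOf_eq, not_or] at this
          exact this.2 ((hmemL x).1 h)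
        have h1 : (p.1 ∪ p.2) ∩ L = p.1 := by
          ext a
          simp only [Finset.mem_inter, Finset.mem_union]
          constructor
          · rintro ⟨h | h, hL'⟩
            · exact h
            · exact absurd hL' (htL a h)
          · intro h; exact ⟨Or.inl h, hA h⟩
        have h2 : (p.1 ∪ p.2) \ L = p.2 := by
          ext a
          simp only [Finset.mem_sdiff, Finset.mem_union]
          constructor
          · rintro ⟨h | h, hL'⟩
            · exact absurd (hA h) hL'
            · exact h
          · intro h; exact ⟨Or.inr h, htL a h⟩
        rw [h1, h2]
      · intro s hs
        show (X : Polynomial ℤ) ^ s.card = X ^ ((s ∩ L).card + (s \ L).card)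
        rw [Finset.card_inter_add_card_sdiff]
    rw [key, Finset.sum_product]
    have hpow : ∑ A ∈ L.powerset, (X : Polynomial ℤ) ^ A.card = (1 + X) ^ (k - 1) := by
      have h1 := Finset.prod_add (fun _ : V => (X : Polynomial ℤ)) (fun _ => 1) L
      simp only [Finset.prod_const, Finset.prod_const_one, mul_one, one_pow] at h1
      rw [add_comm 1 (X : Polynomial ℤ), ← hLcard, h1]
    rw [← hpow, Finset.sum_mul]
    refine Finset.sum_congr rfl fun A _ => ?_
    rw [Finset.mul_sum]
    refine Finset.sum_congr (by simp) fun t _ => ?_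
    rw [pow_add]
  · -- v ∈ s part
    have key : ∑ s ∈ (Finset.univ.filter fun s : Finset V => IsIndep G s).filter
          (fun s => v ∈ s), (X : Polynomial ℤ) ^ s.card
        = ∑ t ∈ (Finset.univ.filter fun s : Finset V => IsIndep G s ∧
            ∀ x ∈ s, x ∈ (({v} ∪ Set.range vs : Set V)ᶜ)),
            (X : Polynomial ℤ) ^ (t.card + 1) := by
      apply Finset.sum_nbij' (i := fun s => s.erase v) (j := fun t => insert v t)
      · intro s hs
        simp only [Finset.mem_filter, Finset.mem_univ, true_and] at hs
        obtain ⟨hind, hvs⟩ := hs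
        simp only [Finset.mem_filter, Finset.mem_univ, true_and]
        refine ⟨fun a ha b hb => hind a (Finset.mem_of_mem_erase ha) b
          (Finset.mem_of_mem_erase hb), ?_⟩
        intro x hx
        simp only [Set.mem_compl_iff, Set.mem_union, Set.mem_singleton_iff,
          Set.mem_range, not_or]
        refine ⟨Finset.ne_of_mem_erase hx, ?_⟩
        rintro ⟨i, rfl⟩
        exact hind v hvs _ (Finset.mem_of_mem_erase hx) ((hnbr _).2 ⟨i, rfl⟩)
      · intro t ht
        simp only [Finset.mem_filter, Finset.mem_univ, true_and] at ht
        obtain ⟨hind, hsub⟩ := ht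
        have htv : ∀ x ∈ t, x ≠ v ∧ ¬ G.Adj v x := by
          intro x hx
          have := hsub x hx
          simp only [Set.mem_compl_iff, Set.mem_union, Set.mem_singleton_iff,
            Set.mem_range, not_or] at this
          exact ⟨this.1, fun h => this.2 ((hnbr x).1 h)⟩
        simp only [Finset.mem_filter, Finset.mem_univ, true_and, Finset.mem_insert]
        refine ⟨?_, Or.inl trivial⟩
        intro a ha b hb hab
        rw [Finset.mem_insert] at ha hb
        rcases ha with rfl | ha <;> rcases hb with rfl | hb
        · exact G.irrefl hab
        · exact (htv b hb).2 hab
        · exact (htv a ha).2 hab.symm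
        · exact hind a ha b hb hab
      · intro s hs
        simp only [Finset.mem_filter, Finset.mem_univ, true_and] at hs
        exact Finset.insert_erase hs.2
      · intro t ht
        simp only [Finset.mem_filter, Finset.mem_univ, true_and] at ht
        apply Finset.erase_insert
        intro hv
        have := ht.2 v hv
        simp at this
      · intro s hs
        simp only [Finset.mem_filter, Finset.mem_univ, true_and] at hs
        rw [Finset.card_erase_add_one hs.2]
    rw [key, Finset.mul_sum]
    refine Finset.sum_congr (by simp) fun t _ => ?_
    rw [pow_succ, mul_comm]
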